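/- For every t ∈ ℂ with t ∉ -ℕ₀, the semi-infinite Jacobi matrix J_t with entries (J_t)_{n,n} = 2n(n+t), (J_t)_{n,n+1} = (J_t)_{n+1,n} = (n+1)(n+t), all other entries zero, commutes entrywise with the Hankel matrix H̃_t whose (m,n) entry is (-1)^{m+n}/(m+n+t). -/

import Mathlib

open scoped BigOperators

/-- Entry of `J * H` where `J` is the tridiagonal matrix with diagonal `β` and
off-diagonal `α` (`J_{k,k+1} = J_{k+1,k} = α k`); the sum is finite since `J` is banded. -/
noncomputable def jacobiMulC (α β : ℕ → ℂ) (H : ℕ → ℕ → ℂ) (m n : ℕ) : ℂ :=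
  (if m = 0 then 0 else α (m - 1) * H (m - 1) n) + β m * H m n + α m * H (m + 1) n

/-- Entry of `H * J`. -/
noncomputable def mulJacobiC (α β : ℕ → ℂ) (H : ℕ → ℕ → ℂ) (m n : ℕ) : ℂ :=
  (if n = 0 then 0 else H m (n - 1) * α (n - 1)) + H m n * β n + H m (n + 1) * α n

/-- for `t ∉ -ℕ₀`, the Jacobi matrix `J_t` with `(J_t)_{n,n} = 2n(n+t)`,
`(J_t)_{n,n+1} = (J_t)_{n+1,n} = (n+1)(n+t)` commutes entrywise with the Hankel matrix
`H̃_t` with `(m,n)` entry `(-1)^{m+n}/(m+n+t)`. -/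
theorem stmt1 (t : ℂ) (ht : ∀ k : ℕ, t ≠ -(k : ℂ)) :
    ∀ m n : ℕ,
      jacobiMulC (fun k => ((k : ℂ) + 1) * ((k : ℂ) + t))
        (fun k => 2 * (k : ℂ) * ((k : ℂ) + t))
        (fun i j => (-1 : ℂ) ^ (i + j) / ((i : ℂ) + (j : ℂ) + t)) m n =
      mulJacobiC (fun k => ((k : ℂ) + 1) * ((k : ℂ) + t))
        (fun k => 2 * (k : ℂ) * ((k : ℂ) + t))
        (fun i j => (-1 : ℂ) ^ (i + j) / ((i : ℂ) + (j : ℂ) + t)) m n := by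
  have key : ∀ k : ℕ, ((k : ℂ) + t) ≠ 0 := fun k h => ht k (by linear_combination h)
  intro m n
  unfold jacobiMulC mulJacobiC
  match m, n with
  | 0, 0 =>
    simp only [if_pos rfl]
    have h0 := key 0
    have h1 := key 1
    have h2 := key 2
    push_cast at *
    have a1 : ((0:ℂ) + 0 + t) ≠ 0 := fun h => h0 (by linear_combination h)
    have a2 : ((0:ℂ) + (0+1) + t) ≠ 0 := fun h => h1 (by linear_combination h)
    have a3 : ((0:ℂ) + 1 + 0 + t) ≠ 0 := fun h => h1 (by linear_combination h)
    have a4 : ((0:ℂ) + 1 + (0+1) + t) ≠ 0 := fun h => h2 (by linear_combination h)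
    have a5 : t ≠ 0 := fun h => h0 (by linear_combination h)
    have a6 : (1:ℂ) + t ≠ 0 := fun h => h1 (by linear_combination h)
    have a7 : (1:ℂ) + 1 + t ≠ 0 := fun h => h2 (by linear_combination h)
    have a8 : (1:ℂ) + (0+1) + t ≠ 0 := fun h => h2 (by linear_combination h)
    field_simp
    try ring
  | 0, Nat.succ n =>
    simp only [if_pos rfl, if_neg (Nat.succ_ne_zero n), Nat.succ_sub_one]
    have h0 := key n
    have h1 := key (n+1)
    have h2 := key (n+2)
    push_cast at *
    have a1 : ((0:ℂ) + (n:ℂ) + t) ≠ 0 := fun h => h0 (by linear_combination h)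
    have a2 : ((0:ℂ) + ((n:ℂ)+1) + t) ≠ 0 := fun h => h1 (by linear_combination h)
    have a3 : ((0:ℂ) + ((n:ℂ)+1+1) + t) ≠ 0 := fun h => h2 (by linear_combination h)
    have a4 : ((1:ℂ) + ((n:ℂ)+1) + t) ≠ 0 := fun h => h2 (by linear_combination h)
    have a5 : ((n:ℂ)+1+1 + t) ≠ 0 := fun h => h2 (by linear_combination h)
    field_simp
    simp only [Nat.succ_eq_add_one]
    ring
  | Nat.succ m, 0 =>
    simp only [if_pos rfl, if_neg (Nat.succ_ne_zero m), Nat.succ_sub_one]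
    have h0 := key m
    have h1 := key (m+1)
    have h2 := key (m+2)
    push_cast at *
    have a1 : ((m:ℂ) + 0 + t) ≠ 0 := fun h => h0 (by linear_combination h)
    have a2 : ((m:ℂ)+1 + 0 + t) ≠ 0 := fun h => h1 (by linear_combination h)
    have a3 : ((m:ℂ)+1+1 + 0 + t) ≠ 0 := fun h => h2 (by linear_combination h)
    have a4 : ((m:ℂ)+1+1 + t) ≠ 0 := fun h => h2 (by linear_combination h)
    field_simp
    simp only [Nat.succ_eq_add_one]
    ring
  | Nat.succ m, Nat.succ n =>
    simp only [if_neg (Nat.succ_ne_zero m), if_neg (Nat.succ_ne_zero n), Nat.succ_sub_one]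
    have h0 := key (m+n+1)
    have h1 := key (m+n+2)
    have h2 := key (m+n+3)
    push_cast at *
    have a1 : ((m:ℂ) + ((n:ℂ)+1) + t) ≠ 0 := fun h => h0 (by linear_combination h)
    have a2 : ((m:ℂ)+1 + ((n:ℂ)+1) + t) ≠ 0 := fun h => h1 (by linear_combination h)
    have a3 : ((m:ℂ)+1+1 + ((n:ℂ)+1) + t) ≠ 0 := fun h => h2 (by linear_combination h)
    have a1' : ((m:ℂ)+1 + (n:ℂ) + t) ≠ 0 := fun h => h0 (by linear_combination h)
    have a3' : ((m:ℂ)+1 + ((n:ℂ)+1+1) + t) ≠ 0 := fun h => h2 (by linear_combination h)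
    field_simp
    simp only [Nat.succ_eq_add_one]
    ring
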